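/- For every integer i > g, the integer r_i vanishes: r_i = 0. -/

import Mathlib

open Finset

private def D (n : ℕ) (f : ℤ → ℤ) (x : ℤ) : ℤ :=
  ∑ m ∈ range (n+1), (-1)^m * (n.choose m : ℤ) * f (x - m)

private lemma D_zero (f : ℤ → ℤ) (x : ℤ) : D 0 f x = f x := by
  simp [D]

private lemma D_succ (n : ℕ) (f : ℤ → ℤ) (x : ℤ) :
    D (n+1) f x = D n f x - D n f (x-1) := by
  have e3 : ∑ m ∈ range (n+1), (-1:ℤ)^m * (n.choose (m+1) : ℤ) * f (x - 1 - m)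
      = f x - D n f x := by
    rw [Finset.sum_range_succ, Nat.choose_succ_self]
    rw [D, Finset.sum_range_succ']
    push_cast
    have : ∀ m ∈ range n, (-1:ℤ)^(m+1) * (n.choose (m+1) : ℤ) * f (x - ((m:ℤ)+1))
        = -((-1:ℤ)^m * (n.choose (m+1) : ℤ) * f (x - 1 - m)) := by
      intro m hm
      have harg : x - ((m : ℤ) + 1) = x - 1 - m := by ring
      rw [harg]; ring
    rw [Finset.sum_congr rfl this, Finset.sum_neg_distrib]
    simp
  have e2 : D n f (x-1) = ∑ m ∈ range (n+1), (-1:ℤ)^m * (n.choose m : ℤ) * f (x - 1 - m) := rfl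
  have e1 : D (n+1) f x
      = f x + ∑ m ∈ range (n+1),
          (-((-1:ℤ)^m * (n.choose m : ℤ) * f (x - 1 - m))
           - (-1:ℤ)^m * (n.choose (m+1) : ℤ) * f (x - 1 - m)) := by
    rw [D, Finset.sum_range_succ']
    rw [add_comm]
    congr 1
    · simp
    · apply Finset.sum_congr rfl
      intro m hm
      have hch : (((n+1).choose (m+1)) : ℤ) = (n.choose m : ℤ) + (n.choose (m+1) : ℤ) := by
        rw [Nat.choose_succ_succ]; push_cast; ring
      have harg : x - ((m+1 : ℕ) : ℤ) = x - 1 - m := by push_cast; ring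
      rw [harg, hch]; ring
  rw [e1, Finset.sum_sub_distrib, Finset.sum_neg_distrib, e3, ← e2]
  ring

private lemma pow_sub_one_expand (g : ℕ) (y : ℤ) :
    y ^ g - (y - 1) ^ g = ∑ t ∈ range g, (-(-1:ℤ)^(g-t) * (g.choose t : ℤ)) * y ^ t := by
  have h : (y - 1) ^ g = ∑ t ∈ range (g+1), y ^ t * (-1:ℤ)^(g-t) * (g.choose t : ℤ) := by
    have := add_pow y (-1 : ℤ) g
    simpa [sub_eq_add_neg] using this
  rw [h, Finset.sum_range_succ]
  simp only [Nat.sub_self, pow_zero, Nat.choose_self, Nat.cast_one]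
  have : y ^ g - (∑ x ∈ range g, y ^ x * (-1:ℤ) ^ (g - x) * (g.choose x : ℤ) + y ^ g * 1 * 1)
      = ∑ x ∈ range g, -(y ^ x * (-1:ℤ) ^ (g - x) * (g.choose x : ℤ)) := by
    rw [Finset.sum_neg_distrib]; ring
  rw [this]
  apply Finset.sum_congr rfl
  intro t ht; ring

private lemma D_pow : ∀ n : ℕ, ∀ g : ℕ, g < n → ∀ x : ℤ, D n (fun y => y ^ g) x = 0 := by
  intro n
  induction n with
  | zero => intro g hg; omega
  | succ n ih =>
    intro g hg x
    rw [D_succ]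
    have step : D n (fun y => y ^ g) x - D n (fun y => y ^ g) (x-1)
        = ∑ m ∈ range (n+1), (-1:ℤ)^m * (n.choose m : ℤ) * ((x - m)^g - (x - 1 - m)^g) := by
      rw [D, D, ← Finset.sum_sub_distrib]
      apply Finset.sum_congr rfl
      intro m hm
      have : x - 1 - (m:ℤ) = x - (m:ℤ) - 1 := by ring
      rw [this]; ring
    rw [step]
    have expand : ∀ m ∈ range (n+1),
        (-1:ℤ)^m * (n.choose m : ℤ) * ((x - m)^g - (x - 1 - m)^g)
        = ∑ t ∈ range g, (-(-1:ℤ)^(g-t) * (g.choose t : ℤ)) * ((-1:ℤ)^m * (n.choose m : ℤ) * (x - m)^t) := by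
      intro m hm
      have harg : x - 1 - (m:ℤ) = (x - m) - 1 := by ring
      rw [harg, pow_sub_one_expand g (x - m), Finset.mul_sum]
      apply Finset.sum_congr rfl
      intro t ht; ring
    rw [Finset.sum_congr rfl expand, Finset.sum_comm]
    apply Finset.sum_eq_zero
    intro t ht
    rw [← Finset.mul_sum]
    have : ∑ m ∈ range (n+1), (-1:ℤ)^m * (n.choose m : ℤ) * (x - m)^t
        = D n (fun y => y ^ t) x := rfl
    rw [this, ih t (by simp at ht; omega) x, mul_zero]

private lemma sumA (g : ℕ) (hg : 1 ≤ g) (r : ℕ → ℤ)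
    (hr : ∀ i : ℕ, 1 ≤ i →
      r i = (i : ℤ) ^ g - ((i : ℤ) - 1) ^ g -
        ∑ j ∈ Finset.Icc 1 (i - 1), r j * (Nat.choose (g + i - j - 1) (g - 1) : ℤ)) :
    ∀ i : ℕ, ∑ j ∈ Icc 1 i, r j * ((g + (i - j)).choose g : ℤ) = (i : ℤ) ^ g := by
  intro i
  induction i with
  | zero => simp [zero_pow (by omega : g ≠ 0)]
  | succ i ih =>
    rw [Finset.sum_Icc_succ_top (by omega : 1 ≤ i + 1)]
    have htop : ((g + (i + 1 - (i+1))).choose g : ℤ) = 1 := by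
      simp
    rw [htop, mul_one]
    have hrec := hr (i+1) (by omega)
    simp only [Nat.add_sub_cancel] at hrec
    have hsum : ∑ j ∈ Icc 1 i, r j * ((g + (i+1) - j - 1).choose (g-1) : ℤ)
        = ∑ j ∈ Icc 1 i, r j * ((g + (i - j)).choose (g-1) : ℤ) := by
      apply Finset.sum_congr rfl
      intro j hj
      simp only [Finset.mem_Icc] at hj
      have : g + (i+1) - j - 1 = g + (i - j) := by omega
      rw [this]
    rw [hsum] at hrec
    have hpascal : ∀ j ∈ Icc 1 i, r j * ((g + (i + 1 - j)).choose g : ℤ)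
        = r j * ((g + (i - j)).choose (g-1) : ℤ) + r j * ((g + (i - j)).choose g : ℤ) := by
      intro j hj
      simp only [Finset.mem_Icc] at hj
      obtain ⟨p, hp⟩ : ∃ p, g = p + 1 := ⟨g - 1, by omega⟩
      have hg1 : g - 1 = p := by omega
      rw [hg1]
      subst hp
      have h1 : p + 1 + (i + 1 - j) = (p + 1 + (i - j)) + 1 := by omega
      rw [h1, Nat.choose_succ_succ]
      push_cast
      ring
    rw [Finset.sum_congr rfl hpascal, Finset.sum_add_distrib, hrec, ih]
    push_cast
    ring

private lemma sumFD (g : ℕ) (hg : 1 ≤ g) (r : ℕ → ℤ)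
    (hr : ∀ i : ℕ, 1 ≤ i →
      r i = (i : ℤ) ^ g - ((i : ℤ) - 1) ^ g -
        ∑ j ∈ Finset.Icc 1 (i - 1), r j * (Nat.choose (g + i - j - 1) (g - 1) : ℤ)) :
    ∀ k : ℕ, k ≤ g → ∀ i : ℕ, k ≤ i →
      ∑ j ∈ Icc 1 i, r j * (((g - k) + (i - j)).choose (g - k) : ℤ)
        = D k (fun y => y ^ g) (i : ℤ) := by
  intro k
  induction k with
  | zero =>
    intro _ i _
    simpa [D] using sumA g hg r hr i
  | succ k ih =>
    intro hk i hi
    obtain ⟨b, rfl⟩ : ∃ b, i = b + 1 := ⟨i - 1, by omega⟩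
    rw [D_succ]
    have hIi := ih (by omega) (b+1) (by omega)
    have hIb := ih (by omega) b (by omega)
    have hcast : ((b+1 : ℕ) : ℤ) - 1 = (b : ℤ) := by push_cast; ring
    rw [hcast, ← hIi, ← hIb]
    obtain ⟨c, hc⟩ : ∃ c, g - k = c + 1 := ⟨g - (k+1), by omega⟩
    have hc1 : g - (k+1) = c := by omega
    rw [hc, hc1]
    rw [Finset.sum_Icc_succ_top (by omega : 1 ≤ b + 1),
        Finset.sum_Icc_succ_top (by omega : 1 ≤ b + 1)]
    simp only [Nat.sub_self, Nat.add_zero, Nat.choose_self, Nat.cast_one]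
    have hterm : ∀ j ∈ Icc 1 b,
        r j * ((c + (b + 1 - j)).choose c : ℤ)
        = r j * ((c + 1 + (b + 1 - j)).choose (c+1) : ℤ) - r j * ((c + 1 + (b - j)).choose (c+1) : ℤ) := by
      intro j hj
      simp only [Finset.mem_Icc] at hj
      obtain ⟨m, hm⟩ : ∃ m, b - j = m := ⟨b - j, rfl⟩
      have h1 : b + 1 - j = m + 1 := by omega
      have h2 : c + 1 + (m + 1) = (c + 1 + m) + 1 := by omega
      rw [h1, hm, h2, Nat.choose_succ_succ (c + 1 + m) c]
      have h3 : c + (m + 1) = c + 1 + m := by omega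
      rw [h3]
      push_cast
      ring
    rw [Finset.sum_congr rfl hterm, Finset.sum_sub_distrib]
    ring


/-- With `r` defined by the recursion
`r i = i^g - (i-1)^g - ∑_{j=1}^{i-1} r j * C(g+i-j-1, g-1)` (for `i ≥ 1`),
one has `r i = 0` for every `i > g`. -/
theorem r_eq_zero_of_gt (g : ℕ) (hg : 1 ≤ g) (r : ℕ → ℤ)
    (hr : ∀ i : ℕ, 1 ≤ i →
      r i = (i : ℤ) ^ g - ((i : ℤ) - 1) ^ g -
        ∑ j ∈ Finset.Icc 1 (i - 1), r j * (Nat.choose (g + i - j - 1) (g - 1) : ℤ)) :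
    ∀ i : ℕ, g < i → r i = 0 := by
  intro i hi
  obtain ⟨b, rfl⟩ : ∃ b, i = b + 1 := ⟨i - 1, by omega⟩
  have hFi := sumFD g hg r hr g le_rfl (b+1) (by omega)
  have hFb := sumFD g hg r hr g le_rfl b (by omega)
  simp only [Nat.sub_self, Nat.zero_add, Nat.choose_zero_right, Nat.cast_one, mul_one] at hFi hFb
  rw [Finset.sum_Icc_succ_top (by omega : 1 ≤ b + 1)] at hFi
  have hD := D_succ g (fun y => y ^ g) ((b+1 : ℕ) : ℤ)
  have hz := D_pow (g+1) g (by omega) ((b+1 : ℕ) : ℤ)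
  rw [hz] at hD
  have hcast : ((b+1 : ℕ) : ℤ) - 1 = (b : ℤ) := by push_cast; ring
  rw [hcast, ← hFi, ← hFb] at hD
  linarith
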